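/- (Bell's theorem) There is no probability space (Λ, μ) together with functions A : S² × Λ → {-1, 1} and B : S² × Λ → {-1, 1} (with A(a,·), B(b,·) measurable for all a, b) such that ∫_Λ A(a, λ) B(b, λ) dμ(λ) = -a·b for all unit vectors a, b ∈ S². -/
import Mathlib


open MeasureTheory Metric
open scoped RealInnerProductSpace

/-- The unit sphere in ℝ³. -/
noncomputable abbrev Sphere2 := Metric.sphere (0 : EuclideanSpace ℝ (Fin 3)) 1

/-- **Bell's theorem.** No local hidden variable model reproduces the singlet
correlations: there is no probability space `(Λ, μ)` with measurable `±1`-valued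
output functions `A(a, ·)`, `B(b, ·)` such that
`∫ A(a, λ) B(b, λ) dμ(λ) = -a·b` for all unit vectors `a, b`. -/
theorem bell_theorem :
    ¬ ∃ (Λ : Type) (_ : MeasurableSpace Λ) (μ : Measure Λ) (_ : IsProbabilityMeasure μ)
        (A B : Sphere2 → Λ → ℝ),
      (∀ a l, A a l = 1 ∨ A a l = -1) ∧
      (∀ b l, B b l = 1 ∨ B b l = -1) ∧
      (∀ a, Measurable (A a)) ∧
      (∀ b, Measurable (B b)) ∧
      (∀ a b : Sphere2,
        ∫ l, A a l * B b l ∂μ =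
          -⟪(a : EuclideanSpace ℝ (Fin 3)), (b : EuclideanSpace ℝ (Fin 3))⟫) := by
  rintro ⟨Λ, mΛ, μ, hμ, A, B, hA, hB, hAm, hBm, hE⟩
  set c : ℝ := Real.sqrt 2 / 2 with hc
  have hc2 : c ^ 2 = 1 / 2 := by
    rw [hc, div_pow, Real.sq_sqrt] <;> norm_num
  have hcpos : 0 < c := by positivity
  -- the four measurement directions
  set a1 : Sphere2 := ⟨(WithLp.equiv 2 (Fin 3 → ℝ)).symm ![1, 0, 0], by
    rw [mem_sphere_zero_iff_norm, EuclideanSpace.norm_eq]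
    simp [Fin.sum_univ_three]⟩ with ha1
  set a2 : Sphere2 := ⟨(WithLp.equiv 2 (Fin 3 → ℝ)).symm ![0, 1, 0], by
    rw [mem_sphere_zero_iff_norm, EuclideanSpace.norm_eq]
    simp [Fin.sum_univ_three]⟩ with ha2
  set b1 : Sphere2 := ⟨(WithLp.equiv 2 (Fin 3 → ℝ)).symm ![-c, -c, 0], by
    rw [mem_sphere_zero_iff_norm, EuclideanSpace.norm_eq]
    simp [Fin.sum_univ_three]
    linarith⟩ with hb1
  set b2 : Sphere2 := ⟨(WithLp.equiv 2 (Fin 3 → ℝ)).symm ![-c, c, 0], by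
    rw [mem_sphere_zero_iff_norm, EuclideanSpace.norm_eq]
    simp [Fin.sum_univ_three]
    linarith⟩ with hb2
  -- the four correlations
  have e11 : ∫ l, A a1 l * B b1 l ∂μ = c := by
    rw [hE a1 b1]; simp [ha1, hb1, PiLp.inner_apply, Fin.sum_univ_three]
  have e12 : ∫ l, A a1 l * B b2 l ∂μ = c := by
    rw [hE a1 b2]; simp [ha1, hb2, PiLp.inner_apply, Fin.sum_univ_three]
  have e21 : ∫ l, A a2 l * B b1 l ∂μ = c := by
    rw [hE a2 b1]; simp [ha2, hb1, PiLp.inner_apply, Fin.sum_univ_three]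
  have e22 : ∫ l, A a2 l * B b2 l ∂μ = -c := by
    rw [hE a2 b2]; simp [ha2, hb2, PiLp.inner_apply, Fin.sum_univ_three]
  -- integrability
  have hint : ∀ a b : Sphere2, Integrable (fun l => A a l * B b l) μ := by
    intro a b
    apply Integrable.mono' (integrable_const (1 : ℝ))
    · exact ((hAm a).mul (hBm b)).aestronglyMeasurable
    · filter_upwards with l
      rcases hA a l with h | h <;> rcases hB b l with h' | h' <;>
        rw [h, h'] <;> norm_num
  -- the CHSH pointwise bound
  have hpt : ∀ l, A a1 l * B b1 l + A a1 l * B b2 l + A a2 l * B b1 l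
      - A a2 l * B b2 l ≤ 2 := by
    intro l
    rcases hA a1 l with h1 | h1 <;> rcases hA a2 l with h2 | h2 <;>
      rcases hB b1 l with h3 | h3 <;> rcases hB b2 l with h4 | h4 <;>
      rw [h1, h2, h3, h4] <;> norm_num
  -- integrate the CHSH bound
  have i2 : Integrable (fun l => A a1 l * B b1 l + A a1 l * B b2 l) μ :=
    (hint a1 b1).add (hint a1 b2)
  have i3 : Integrable (fun l => A a1 l * B b1 l + A a1 l * B b2 l
      + A a2 l * B b1 l) μ := i2.add (hint a2 b1)
  have hInt : ∫ l, (A a1 l * B b1 l + A a1 l * B b2 l + A a2 l * B b1 l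
      - A a2 l * B b2 l) ∂μ ≤ ∫ _, (2 : ℝ) ∂μ := by
    apply integral_mono _ (integrable_const _) hpt
    exact i3.sub (hint a2 b2)
  rw [integral_const] at hInt
  rw [integral_sub i3 (hint a2 b2), integral_add i2 (hint a2 b1),
    integral_add (hint a1 b1) (hint a1 b2), e11, e12, e21, e22] at hInt
  simp at hInt
  -- 4c = 2√2 ≤ 2 is absurd
  have : Real.sqrt 2 ≤ 1 := by
    rw [hc] at hInt; linarith
  nlinarith [Real.sq_sqrt (by norm_num : (2:ℝ) ≥ 0), Real.sqrt_nonneg 2]
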